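/- Let θ > 0, let J ≥ 1 be an integer, and let c be a natural number with c ≥ 1. Then Σ_{r=1}^{c} binom(c, r) · (r-1)! · (θ/J)_{(c-r)} / (θ/J)_{(c)} = ψ(1 - θ/J - c) - ψ(1 - θ/J), where ψ is the digamma function, provided θ/J is not a nonnegative integer (so that the digamma arguments avoid poles). -/

import Mathlib

open Finset

noncomputable def risingFactorial (x : ℝ) (u : ℕ) : ℝ :=
  ∏ j ∈ Finset.range u, (x + j)

noncomputable def genFacCoef (u v : ℕ) (a : ℝ) : ℝ :=
  (1 / (v.factorial : ℝ)) *
    ∑ i ∈ Finset.range (v + 1),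
      (-1 : ℝ) ^ i * (v.choose i : ℝ) * risingFactorial (-(i * a)) u

def stirling1 : ℕ → ℕ → ℕ
  | 0, 0 => 1
  | 0, _ + 1 => 0
  | _ + 1, 0 => 0
  | u + 1, v + 1 => u * stirling1 u (v + 1) + stirling1 u v

noncomputable def digamma (x : ℝ) : ℝ := deriv (fun y => Real.log (Real.Gamma y)) x

lemma rf_succ (x : ℝ) (n : ℕ) : risingFactorial x (n+1) = risingFactorial x n * (x + n) :=
  Finset.prod_range_succ _ _

lemma rf_zero (x : ℝ) : risingFactorial x 0 = 1 := rfl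

lemma rf_shift (x : ℝ) (n : ℕ) : risingFactorial x (n+1) = x * risingFactorial (x+1) n := by
  unfold risingFactorial
  rw [Finset.prod_range_succ']
  simp only [Nat.cast_zero, add_zero]
  rw [mul_comm]
  congr 1
  apply Finset.prod_congr rfl
  intro i _
  push_cast
  ring

lemma rf_pos {x : ℝ} (hx : 0 < x) (n : ℕ) : 0 < risingFactorial x n := by
  apply Finset.prod_pos
  intro i _
  positivity

lemma tele (c : ℕ) (y : ℝ) :
    risingFactorial (y+1) c = (c.factorial : ℝ) +
      y * ∑ k ∈ Finset.range c,
        risingFactorial (y+1) k * ((c.factorial : ℝ) / ((k+1).factorial : ℝ)) := by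
  induction c with
  | zero => simp [rf_zero]
  | succ c ih =>
    rw [rf_succ, Finset.sum_range_succ]
    have hfac : ∀ k : ℕ, ((c+1).factorial : ℝ) / ((k+1).factorial : ℝ)
        = (c+1) * ((c.factorial : ℝ) / ((k+1).factorial : ℝ)) := by
      intro k
      rw [Nat.factorial_succ]
      push_cast
      ring
    have hsum : ∑ k ∈ Finset.range c,
        risingFactorial (y+1) k * (((c+1).factorial : ℝ) / ((k+1).factorial : ℝ))
        = (c+1) * ∑ k ∈ Finset.range c,
            risingFactorial (y+1) k * ((c.factorial : ℝ) / ((k+1).factorial : ℝ)) := by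
      rw [Finset.mul_sum]
      apply Finset.sum_congr rfl
      intro k _
      rw [hfac]; ring
    rw [hsum]
    have hself : (((c+1).factorial : ℝ) / (((c:ℕ)+1).factorial : ℝ)) = 1 := by
      apply div_self
      exact_mod_cast Nat.factorial_pos (c+1) |>.ne'
    rw [hself]
    rw [Nat.factorial_succ]
    push_cast
    nlinarith [ih, sq_nonneg y]

lemma L1 (c : ℕ) (y : ℝ) :
    y * ∑ s ∈ Finset.range c,
        (c.choose s : ℝ) * (s.factorial : ℝ) * risingFactorial (y+1) (c-1-s)
      + (c.factorial : ℝ) = risingFactorial (y+1) c := by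
  have hrefl := Finset.sum_range_reflect
    (fun s => (c.choose s : ℝ) * (s.factorial : ℝ) * risingFactorial (y+1) (c-1-s)) c
  rw [← hrefl]
  have hterm : ∀ k ∈ Finset.range c,
      (c.choose (c-1-k) : ℝ) * ((c-1-k).factorial : ℝ) * risingFactorial (y+1) (c-1-(c-1-k))
      = risingFactorial (y+1) k * ((c.factorial : ℝ) / ((k+1).factorial : ℝ)) := by
    intro k hk
    rw [Finset.mem_range] at hk
    have h1 : c - 1 - (c-1-k) = k := by omega
    have h2 : c - (c-1-k) = k+1 := by omega
    have h3 : c - 1 - k ≤ c := by omega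
    have h4 := Nat.choose_mul_factorial_mul_factorial h3
    rw [h2] at h4
    have h5 : (c.choose (c-1-k) : ℝ) * ((c-1-k).factorial : ℝ) * ((k+1).factorial : ℝ)
        = (c.factorial : ℝ) := by exact_mod_cast congrArg (Nat.cast (R := ℝ)) h4
    have hkf : ((k+1).factorial : ℝ) ≠ 0 := by
      exact_mod_cast (Nat.factorial_pos (k+1)).ne'
    rw [h1]
    field_simp
    linear_combination risingFactorial (y+1) k * h5
  rw [Finset.sum_congr rfl hterm]
  linarith [tele c y]

noncomputable def Asum (c : ℕ) (x : ℝ) : ℝ :=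
  ∑ r ∈ Finset.Icc 1 c, (c.choose r : ℝ) * ((r-1).factorial : ℝ) * risingFactorial x (c-r)

lemma Asum_range (c : ℕ) (x : ℝ) :
    Asum c x = ∑ s ∈ Finset.range c,
      (c.choose (s+1) : ℝ) * (s.factorial : ℝ) * risingFactorial x (c-1-s) := by
  unfold Asum
  rw [show Finset.Icc 1 c = Finset.Ico 1 (c+1) by rfl, Finset.sum_Ico_eq_sum_range]
  apply Finset.sum_congr rfl
  intro s _
  have h1 : 1 + s - 1 = s := by omega
  have h2 : c - (1+s) = c - 1 - s := by omega
  rw [h1, h2, add_comm 1 s]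

lemma Arec (c : ℕ) (x : ℝ) :
    Asum (c+1) x = risingFactorial (x+1) c + x * Asum c (x+1) := by
  rw [Asum_range, Asum_range]
  rw [Finset.sum_range_succ]
  have hlast : ((c+1).choose (c+1) : ℝ) * (c.factorial : ℝ) * risingFactorial x (c+1-1-c)
      = (c.factorial : ℝ) := by
    simp [Nat.choose_self, rf_zero, show c+1-1-c = 0 by omega]
  rw [hlast]
  have hterm : ∀ s ∈ Finset.range c,
      ((c+1).choose (s+1) : ℝ) * (s.factorial : ℝ) * risingFactorial x (c+1-1-s)
      = x * ((c.choose s : ℝ) * (s.factorial : ℝ) * risingFactorial (x+1) (c-1-s))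
        + x * ((c.choose (s+1) : ℝ) * (s.factorial : ℝ) * risingFactorial (x+1) (c-1-s)) := by
    intro s hs
    rw [Finset.mem_range] at hs
    have h1 : c+1-1-s = (c-1-s)+1 := by omega
    rw [h1, rf_shift, Nat.choose_succ_succ]
    push_cast
    ring
  rw [Finset.sum_congr rfl hterm, Finset.sum_add_distrib, ← Finset.mul_sum, ← Finset.mul_sum]
  have := L1 c x
  linarith [L1 c x]

lemma key (c : ℕ) : ∀ x : ℝ, 0 < x →
    Asum c x / risingFactorial x c = ∑ j ∈ Finset.range c, 1/(x+j) := by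
  induction c with
  | zero => intro x hx; simp [Asum, rf_zero]
  | succ c ih =>
    intro x hx
    have hx1 : (0:ℝ) < x + 1 := by linarith
    have hrf : risingFactorial (x+1) c ≠ 0 := (rf_pos hx1 c).ne'
    rw [Arec, rf_shift, Finset.sum_range_succ']
    have hIH := ih (x+1) hx1
    have hcast : ∀ j ∈ Finset.range c, 1/(x+1+(j:ℝ)) = 1/(x + ((j+1 : ℕ):ℝ)) := by
      intro j _; push_cast; ring_nf
    rw [← Finset.sum_congr rfl hcast, ← hIH]
    have hA : Asum c (x+1) = (∑ j ∈ Finset.range c, 1/(x+1+(j:ℝ))) * risingFactorial (x+1) c := by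
      rw [← hIH]; field_simp
    field_simp
    ring


lemma digamma_add_one (y : ℝ) (hy : ∀ m : ℕ, y ≠ -m) : digamma (y+1) = digamma y + 1/y := by
  have hy0 : y ≠ 0 := by simpa using hy 0
  have hΓ : Real.Gamma y ≠ 0 := Real.Gamma_ne_zero hy
  have hdΓ : DifferentiableAt ℝ Real.Gamma y := Real.differentiableAt_Gamma hy
  have ev : (fun z => Real.log (Real.Gamma (z+1)))
      =ᶠ[nhds y] (fun z => Real.log z + Real.log (Real.Gamma z)) := by
    have h1 : ∀ᶠ z in nhds y, z ≠ 0 := eventually_ne_nhds hy0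
    have h2 : ∀ᶠ z in nhds y, Real.Gamma z ≠ 0 := hdΓ.continuousAt.eventually_ne hΓ
    filter_upwards [h1, h2] with z hz1 hz2
    rw [Real.Gamma_add_one hz1, Real.log_mul hz1 hz2]
  have h3 : digamma (y+1) = deriv (fun z => Real.log (Real.Gamma (z+1))) y := by
    unfold digamma
    exact (deriv_comp_add_const (fun z => Real.log (Real.Gamma z)) 1 y).symm
  rw [h3, ev.deriv_eq]
  have hdlog : DifferentiableAt ℝ Real.log y := Real.differentiableAt_log hy0
  have hdlg : DifferentiableAt ℝ (fun z => Real.log (Real.Gamma z)) y := hdΓ.log hΓ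
  rw [deriv_fun_add hdlog hdlg, Real.deriv_log]
  unfold digamma
  rw [one_div]
  ring

lemma digamma_shift (x : ℝ) (hx : 0 < x) (hnp : ∀ m : ℕ, x ≠ m) (n : ℕ) :
    digamma (1 - x - n) = digamma (1 - x) + ∑ k ∈ Finset.range n, 1/(x + k) := by
  induction n with
  | zero => simp
  | succ n ih =>
    have hy : ∀ m : ℕ, -x - n ≠ -(m:ℝ) := by
      intro m h
      have hxe : x = (m:ℝ) - (n:ℝ) := by linarith
      rcases le_or_gt m n with hmn | hmn
      · have : (m:ℝ) ≤ (n:ℝ) := by exact_mod_cast hmn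
        linarith
      · have : x = ((m - n : ℕ) : ℝ) := by
          rw [Nat.cast_sub hmn.le]; linarith
        exact hnp (m-n) this
    have hstep := digamma_add_one (-x - n) hy
    have h1 : -x - (n:ℝ) + 1 = 1 - x - n := by ring
    have h2 : (1:ℝ) - x - ((n+1 : ℕ):ℝ) = -x - n := by push_cast; ring
    rw [h1] at hstep
    rw [h2, Finset.sum_range_succ]
    have hneg : (1:ℝ)/(-x - (n:ℝ)) = -(1/(x+(n:ℝ))) := by
      rw [show -x - (n:ℝ) = -(x + n) by ring, one_div, one_div, inv_neg]
    linarith [hstep, ih, hneg]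

theorem sum_eq_digamma_diff (θ : ℝ) (hθ : 0 < θ) (J : ℕ) (hJ : 1 ≤ J) (c : ℕ) (hc : 1 ≤ c)
    (hnp : ∀ m : ℕ, θ / J ≠ m) :
    ∑ r ∈ Finset.Icc 1 c,
        (c.choose r : ℝ) * ((r - 1).factorial : ℝ) * risingFactorial (θ / J) (c - r)
          / risingFactorial (θ / J) c
      = digamma (1 - θ / J - c) - digamma (1 - θ / J) := by
  have hJ' : (0:ℝ) < J := by exact_mod_cast hJ
  have hx : 0 < θ / J := div_pos hθ hJ'
  have hsum : ∑ r ∈ Finset.Icc 1 c,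
        (c.choose r : ℝ) * ((r - 1).factorial : ℝ) * risingFactorial (θ / J) (c - r)
          / risingFactorial (θ / J) c
      = Asum c (θ / J) / risingFactorial (θ / J) c := by
    rw [Asum, Finset.sum_div]
  rw [hsum, key c (θ / J) hx, digamma_shift (θ / J) hx hnp c]
  ring
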